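/- Let Ω be a set, 𝔖 a coat of Ω, p' : 𝔖' → [0,1] a quasi-probability measure of 𝔖, and p⋇ the associated exterior quasi-measure. Suppose moreover that p⋇ restricted to the algebra 𝒜(𝔖) generated by 𝔖 is countably additive on 𝒜(𝔖) (i.e., it is a pre-measure in the σ-additive sense). Then there exists a probability measure p on the σ-algebra σ(𝔖) generated by 𝔖 such that p(X) = p'(X) for every X ∈ 𝔖. -/

import Mathlib

open Set
open scoped ENNReal

/-- A family of subsets of `Ω` is a *coat* of `Ω` if it contains `∅` and `Ω`. -/
def IsCoat {Ω : Type*} (S : Set (Set Ω)) : Prop := ∅ ∈ S ∧ Set.univ ∈ S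

/-- The *refinement* of `S`: all sets of the form `X ∩ Y` or `X ∩ Yᶜ` with `X, Y ∈ S`. -/
def refinement {Ω : Type*} (S : Set (Set Ω)) : Set (Set Ω) :=
  {T | ∃ X ∈ S, ∃ Y ∈ S, T = X ∩ Y ∨ T = X ∩ Yᶜ}

/-- `p` is a *quasi-probability measure* of the coat `S` (witnesses in `S`). -/
def IsQuasiMeasure {Ω : Type*} (S : Set (Set Ω)) (p : Set Ω → ℝ) : Prop :=
  (∀ T ∈ refinement S, p T ∈ Set.Icc (0 : ℝ) 1) ∧
  p ∅ = 0 ∧ p Set.univ = 1 ∧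
  (∀ X ∈ S, ∀ Y ∈ S, p X = p (X ∩ Y) + p (X ∩ Yᶜ)) ∧
  (∀ X ∈ S, ∀ Y ∈ S, ∃ W ∈ S, X ∩ Y ⊆ W ∧ p (X ∩ Y) = p W) ∧
  (∀ X ∈ S, ∀ Y ∈ S, ∃ Z ∈ S, X ∩ Yᶜ ⊆ Z ∧ p (X ∩ Yᶜ) = p Z) ∧
  (∀ X ∈ S, ∀ (m : ℕ) (T : Fin m → Set Ω), (∀ n, T n ∈ S) →
      X ⊆ ⋃ n, T n → p X ≤ ∑ n, p (T n))

/-- The *exterior quasi-measure* associated with `p` and the coat `S`. -/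
noncomputable def outerQM {Ω : Type*} (S : Set (Set Ω)) (p : Set Ω → ℝ) (A : Set Ω) : ℝ :=
  sInf {r | ∃ (m : ℕ) (T : Fin m → Set Ω),
    (∀ n, T n ∈ S) ∧ A ⊆ (⋃ n, T n) ∧ r = ∑ n, p (T n)}

/-- The algebra of subsets of `Ω` generated by `S`: the smallest family containing `S`,
`∅` and `univ`, closed under complements and finite unions. -/
def genAlgebra {Ω : Type*} (S : Set (Set Ω)) : Set (Set Ω) :=
  ⋂₀ {A | S ⊆ A ∧ ∅ ∈ A ∧ Set.univ ∈ A ∧ (∀ W ∈ A, Wᶜ ∈ A) ∧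
      ∀ W ∈ A, ∀ Z ∈ A, W ∪ Z ∈ A}

section Aux

variable {Ω : Type*} {S : Set (Set Ω)} {p : Set Ω → ℝ}

lemma subset_genAlgebra : S ⊆ genAlgebra S := fun X hX T hT => hT.1 hX

lemma empty_mem_genAlgebra : (∅ : Set Ω) ∈ genAlgebra S := fun T hT => hT.2.1

lemma univ_mem_genAlgebra : (Set.univ : Set Ω) ∈ genAlgebra S := fun T hT => hT.2.2.1

lemma compl_mem_genAlgebra {A : Set Ω} (h : A ∈ genAlgebra S) : Aᶜ ∈ genAlgebra S :=
  fun T hT => hT.2.2.2.1 A (h T hT)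

lemma union_mem_genAlgebra {A B : Set Ω} (hA : A ∈ genAlgebra S) (hB : B ∈ genAlgebra S) :
    A ∪ B ∈ genAlgebra S := fun T hT => hT.2.2.2.2 A (hA T hT) B (hB T hT)

lemma isSetRing_genAlgebra : MeasureTheory.IsSetRing (genAlgebra S) where
  empty_mem := empty_mem_genAlgebra
  union_mem _ _ hs ht := union_mem_genAlgebra hs ht
  sdiff_mem s t hs ht := by
    have : s \ t = (sᶜ ∪ t)ᶜ := by ext x; simp [Set.diff_eq, not_or]
    rw [this]
    exact compl_mem_genAlgebra (union_mem_genAlgebra (compl_mem_genAlgebra hs) ht)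

lemma measurableSet_of_mem_genAlgebra {A : Set Ω} (h : A ∈ genAlgebra S) :
    @MeasurableSet Ω (MeasurableSpace.generateFrom S) A := by
  letI m : MeasurableSpace Ω := MeasurableSpace.generateFrom S
  refine h {B | MeasurableSet B}
    ⟨fun X hX => MeasurableSpace.measurableSet_generateFrom hX, ?_, ?_,
      fun W hW => ?_, fun W hW Z hZ => ?_⟩
  · rw [Set.mem_setOf_eq]; exact MeasurableSet.empty
  · rw [Set.mem_setOf_eq]; exact MeasurableSet.univ
  · rw [Set.mem_setOf_eq] at hW ⊢; exact hW.compl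
  · rw [Set.mem_setOf_eq] at hW hZ ⊢; exact hW.union hZ

lemma p_nonneg (hp : IsQuasiMeasure S p) {X : Set Ω} (hX : X ∈ S) : 0 ≤ p X := by
  have : X ∈ refinement S := ⟨X, hX, X, hX, Or.inl (Set.inter_self X).symm⟩
  exact (hp.1 X this).1

lemma outerQM_set_nonneg (hp : IsQuasiMeasure S p) (A : Set Ω) :
    ∀ r ∈ {r | ∃ (m : ℕ) (T : Fin m → Set Ω),
      (∀ n, T n ∈ S) ∧ A ⊆ (⋃ n, T n) ∧ r = ∑ n, p (T n)}, (0:ℝ) ≤ r := by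
  rintro r ⟨m, T, hT, -, rfl⟩
  exact Finset.sum_nonneg fun n _ => p_nonneg hp (hT n)

lemma outerQM_set_nonempty (hS : IsCoat S) (A : Set Ω) :
    Set.Nonempty {r | ∃ (m : ℕ) (T : Fin m → Set Ω),
      (∀ n, T n ∈ S) ∧ A ⊆ (⋃ n, T n) ∧ r = ∑ n, p (T n)} := by
  refine ⟨p Set.univ, 1, fun _ => Set.univ, fun _ => hS.2, ?_, by simp⟩
  intro x _
  exact Set.mem_iUnion.2 ⟨0, Set.mem_univ x⟩

lemma outerQM_nonneg (hp : IsQuasiMeasure S p) (A : Set Ω) : 0 ≤ outerQM S p A :=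
  Real.sInf_nonneg (outerQM_set_nonneg hp A)

lemma outerQM_mono (hS : IsCoat S) (hp : IsQuasiMeasure S p) {A B : Set Ω} (h : A ⊆ B) :
    outerQM S p A ≤ outerQM S p B := by
  apply csInf_le_csInf ⟨0, outerQM_set_nonneg hp A⟩ (outerQM_set_nonempty hS B)
  rintro r ⟨m, T, hT, hcov, rfl⟩
  exact ⟨m, T, hT, h.trans hcov, rfl⟩

lemma outerQM_eq (hS : IsCoat S) (hp : IsQuasiMeasure S p) {X : Set Ω} (hX : X ∈ S) :
    outerQM S p X = p X := by
  apply le_antisymm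
  · apply csInf_le ⟨0, outerQM_set_nonneg hp X⟩
    exact ⟨1, fun _ => X, fun _ => hX, Set.subset_iUnion (fun _ : Fin 1 => X) 0, by simp⟩
  · apply le_csInf (outerQM_set_nonempty hS X)
    rintro r ⟨m, T, hT, hcov, rfl⟩
    exact hp.2.2.2.2.2.2 X hX m T hT hcov

lemma outerQM_empty (hS : IsCoat S) (hp : IsQuasiMeasure S p) : outerQM S p (∅ : Set Ω) = 0 := by
  rw [outerQM_eq hS hp hS.1, hp.2.1]

end Aux

section Aux2

variable {Ω : Type*} {S : Set (Set Ω)} {p : Set Ω → ℝ}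

lemma outerQM_finadd (hS : IsCoat S) (hp : IsQuasiMeasure S p)
    (hadd : ∀ A : ℕ → Set Ω, (∀ n, A n ∈ genAlgebra S) →
      (∀ i j, i ≠ j → Disjoint (A i) (A j)) → (⋃ n, A n) ∈ genAlgebra S →
      outerQM S p (⋃ n, A n) = ∑' n, outerQM S p (A n))
    (C : ℕ → Set Ω) (hC : ∀ n, C n ∈ genAlgebra S)
    (hd : ∀ i j, i ≠ j → Disjoint (C i) (C j)) (N : ℕ) :
    outerQM S p (⋃ i ∈ Finset.range N, C i) = ∑ i ∈ Finset.range N, outerQM S p (C i) := by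
  classical
  set D : ℕ → Set Ω := fun n => if n < N then C n else ∅ with hD
  have hDmem : ∀ n, D n ∈ genAlgebra S := by
    intro n; by_cases h : n < N <;> simp [hD, h, hC n, empty_mem_genAlgebra]
  have hDdisj : ∀ i j, i ≠ j → Disjoint (D i) (D j) := by
    intro i j hij
    by_cases hi : i < N <;> by_cases hj : j < N <;>
      simp [hD, hi, hj, hd i j hij]
  have hDU : (⋃ n, D n) = ⋃ i ∈ Finset.range N, C i := by
    ext x
    simp only [Set.mem_iUnion, Finset.mem_range, hD]
    constructor
    · rintro ⟨n, hx⟩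
      by_cases h : n < N
      · rw [if_pos h] at hx; exact ⟨n, h, hx⟩
      · rw [if_neg h] at hx; exact hx.elim
    · rintro ⟨n, h, hx⟩
      exact ⟨n, by rw [if_pos h]; exact hx⟩
  have hUmem : (⋃ n, D n) ∈ genAlgebra S := by
    rw [hDU]; exact isSetRing_genAlgebra.biUnion_mem _ (fun n _ => hC n)
  have h1 := hadd D hDmem hDdisj hUmem
  rw [hDU] at h1
  rw [h1, tsum_eq_sum (s := Finset.range N) ?_]
  · apply Finset.sum_congr rfl
    intro i hi
    rw [Finset.mem_range] at hi
    simp [hD, hi]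
  · intro n hn
    rw [Finset.mem_range] at hn
    simp only [hD, if_neg hn]
    exact outerQM_empty hS hp

lemma outerQM_add2 (hS : IsCoat S) (hp : IsQuasiMeasure S p)
    (hadd : ∀ A : ℕ → Set Ω, (∀ n, A n ∈ genAlgebra S) →
      (∀ i j, i ≠ j → Disjoint (A i) (A j)) → (⋃ n, A n) ∈ genAlgebra S →
      outerQM S p (⋃ n, A n) = ∑' n, outerQM S p (A n))
    {A B : Set Ω} (hA : A ∈ genAlgebra S) (hB : B ∈ genAlgebra S)
    (hd : Disjoint A B) : outerQM S p (A ∪ B) = outerQM S p A + outerQM S p B := by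
  classical
  set C : ℕ → Set Ω := fun n => if n = 0 then A else if n = 1 then B else ∅ with hC
  have e0 : C 0 = A := by simp [hC]
  have e1 : C 1 = B := by simp [hC]
  have e2 : ∀ n, C (n + 2) = ∅ := by intro n; simp [hC]
  have hCmem : ∀ n, C n ∈ genAlgebra S := by
    intro n
    rcases n with _ | _ | n
    · rw [e0]; exact hA
    · rw [e1]; exact hB
    · rw [e2]; exact empty_mem_genAlgebra
  have hCdisj : ∀ i j, i ≠ j → Disjoint (C i) (C j) := by
    intro i j hij
    rcases i with _ | _ | i <;> rcases j with _ | _ | j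
    · exact (hij rfl).elim
    · rw [e0, e1]; exact hd
    · rw [e2]; exact Set.disjoint_empty _
    · rw [e0, e1]; exact hd.symm
    · exact (hij rfl).elim
    · rw [e2]; exact Set.disjoint_empty _
    · rw [e2]; exact Set.empty_disjoint _
    · rw [e2]; exact Set.empty_disjoint _
    · rw [e2]; exact Set.empty_disjoint _
  have h := outerQM_finadd hS hp hadd C hCmem hCdisj 2
  have hU : (⋃ i ∈ Finset.range 2, C i) = A ∪ B := by
    ext x
    simp only [Set.mem_iUnion, Finset.mem_range, Set.mem_union]
    constructor
    · rintro ⟨i, hi, hx⟩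
      interval_cases i
      · rw [e0] at hx; exact Or.inl hx
      · rw [e1] at hx; exact Or.inr hx
    · rintro (hx | hx)
      · exact ⟨0, by norm_num, by rw [e0]; exact hx⟩
      · exact ⟨1, by norm_num, by rw [e1]; exact hx⟩
  rw [hU] at h
  rw [h, Finset.sum_range_succ, Finset.sum_range_one, e0, e1]

end Aux2

/-- if the exterior quasi-measure is countably additive on the algebra
generated by `𝔖`, then there is a probability measure on the σ-algebra generated by `𝔖`
extending the quasi-measure `p'`. -/
theorem exists_probabilityMeasure_extending {Ω : Type*} (S : Set (Set Ω)) (p : Set Ω → ℝ)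
    (hS : IsCoat S) (hp : IsQuasiMeasure S p)
    (hadd : ∀ A : ℕ → Set Ω, (∀ n, A n ∈ genAlgebra S) →
      (∀ i j, i ≠ j → Disjoint (A i) (A j)) → (⋃ n, A n) ∈ genAlgebra S →
      outerQM S p (⋃ n, A n) = ∑' n, outerQM S p (A n)) :
    ∃ μ : @MeasureTheory.Measure Ω (MeasurableSpace.generateFrom S),
      @MeasureTheory.IsProbabilityMeasure Ω (MeasurableSpace.generateFrom S) μ ∧
      ∀ X ∈ S, μ X = ENNReal.ofReal (p X) := by
  classical
  letI msp : MeasurableSpace Ω := MeasurableSpace.generateFrom S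
  set M : ∀ s : Set Ω, s ∈ genAlgebra S → ℝ≥0∞ :=
    fun s _ => ENNReal.ofReal (outerQM S p s) with hM
  have P0 : (∅ : Set Ω) ∈ genAlgebra S := empty_mem_genAlgebra
  have m0 : M ∅ P0 = 0 := by
    rw [hM]; simp [outerQM_empty hS hp]
  set ν : MeasureTheory.OuterMeasure Ω :=
    MeasureTheory.OuterMeasure.ofFunction (MeasureTheory.extend M)
      (MeasureTheory.extend_empty P0 m0) with hν
  have hext : ∀ (s : Set Ω), s ∈ genAlgebra S →
      MeasureTheory.extend M s = ENNReal.ofReal (outerQM S p s) :=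
    fun s hs => MeasureTheory.extend_eq M hs
  -- ν agrees with the exterior quasi-measure on the algebra
  have key : ∀ s ∈ genAlgebra S, ν s = ENNReal.ofReal (outerQM S p s) := by
    intro s hs
    refine le_antisymm
      ((MeasureTheory.OuterMeasure.ofFunction_le s).trans (le_of_eq (hext s hs))) ?_
    refine le_iInf fun f => le_iInf fun hf => ?_
    by_cases hfa : ∀ i, f i ∈ genAlgebra S
    · set g : ℕ → Set Ω := fun i => s ∩ disjointed f i with hg
      have hgmem : ∀ i, g i ∈ genAlgebra S := fun i =>
        isSetRing_genAlgebra.inter_mem hs (isSetRing_genAlgebra.disjointed_mem hfa i)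
      have hgdisj : ∀ i j, i ≠ j → Disjoint (g i) (g j) := fun i j hij =>
        (disjoint_disjointed f hij).mono Set.inter_subset_right Set.inter_subset_right
      have hgU : (⋃ i, g i) = s := by
        rw [hg]
        simp only [← Set.inter_iUnion, iUnion_disjointed]
        exact Set.inter_eq_left.2 hf
      have hsum := hadd g hgmem hgdisj (by rw [hgU]; exact hs)
      rw [hgU] at hsum
      have hnn : ∀ i, 0 ≤ outerQM S p (g i) := fun i => outerQM_nonneg hp _
      have hgsub : ∀ i, g i ⊆ s := fun i => Set.inter_subset_left
      have hsummable : Summable fun i => outerQM S p (g i) := by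
        apply summable_of_sum_range_le (c := outerQM S p s) hnn
        intro n
        rw [← outerQM_finadd hS hp hadd g hgmem hgdisj n]
        exact outerQM_mono hS hp (Set.iUnion₂_subset fun i _ => hgsub i)
      calc ENNReal.ofReal (outerQM S p s) = ∑' i, ENNReal.ofReal (outerQM S p (g i)) := by
            rw [hsum]; exact ENNReal.ofReal_tsum_of_nonneg hnn hsummable
        _ ≤ ∑' i, MeasureTheory.extend M (f i) := by
            refine ENNReal.tsum_le_tsum fun i => ?_
            rw [hext (f i) (hfa i)]
            exact ENNReal.ofReal_le_ofReal
              (outerQM_mono hS hp (Set.inter_subset_right.trans (disjointed_subset f i)))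
    · obtain ⟨i, hi⟩ := not_forall.1 hfa
      have htop : MeasureTheory.extend M (f i) = ∞ := MeasureTheory.extend_eq_top M hi
      have : (⊤ : ℝ≥0∞) ≤ ∑' i, MeasureTheory.extend M (f i) :=
        htop ▸ ENNReal.le_tsum i
      exact le_top.trans this
  -- every set in the algebra is Carathéodory-measurable
  have hcar : ∀ s ∈ genAlgebra S, @MeasurableSet Ω ν.caratheodory s := by
    intro s hs
    apply MeasureTheory.OuterMeasure.ofFunction_caratheodory
    intro t
    by_cases ht : t ∈ genAlgebra S
    · have h1 : t ∩ s ∈ genAlgebra S := isSetRing_genAlgebra.inter_mem ht hs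
      have h2 : t \ s ∈ genAlgebra S := isSetRing_genAlgebra.sdiff_mem ht hs
      rw [hext _ ht, hext _ h1, hext _ h2,
        ← ENNReal.ofReal_add (outerQM_nonneg hp _) (outerQM_nonneg hp _)]
      apply ENNReal.ofReal_le_ofReal
      have hdis : Disjoint (t ∩ s) (t \ s) :=
        disjoint_sdiff_self_right.mono_left Set.inter_subset_right
      have h3 := outerQM_add2 hS hp hadd h1 h2 hdis
      rw [Set.inter_union_diff] at h3
      exact le_of_eq h3.symm
    · rw [MeasureTheory.extend_eq_top M ht]; exact le_top
  have hle : msp ≤ ν.caratheodory :=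
    MeasurableSpace.generateFrom_le fun X hX => hcar X (subset_genAlgebra hX)
  refine ⟨ν.toMeasure hle, ⟨?_⟩, ?_⟩
  · rw [MeasureTheory.toMeasure_apply _ _ MeasurableSet.univ,
      key _ univ_mem_genAlgebra, outerQM_eq hS hp hS.2, hp.2.2.1, ENNReal.ofReal_one]
  · intro X hX
    rw [MeasureTheory.toMeasure_apply _ _
        (measurableSet_of_mem_genAlgebra (subset_genAlgebra hX)),
      key _ (subset_genAlgebra hX), outerQM_eq hS hp hX]
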